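/- Let a ∈ ℝ, let κ : ℤ → ℝ be the 4-periodic sequence with κ₀ = κ₁ = 1, κ₂ = κ₃ = −1, and let u : ℝ → ℤ → ℝ be differentiable in t and satisfy u̇ₙ = (uₙ² − a²)[(uₙ₊₁² − a²)(uₙ₊₂ − uₙ) + (uₙ₋₁² − a²)(uₙ − uₙ₋₂)]. Define v s n = κₙ · u (−s) n. Then v satisfies v̇ₙ = (vₙ² − a²)[(vₙ₊₁² − a²)(vₙ₊₂ + vₙ) − (vₙ₋₁² − a²)(vₙ + vₙ₋₂)], where v̇ₙ denotes the derivative with respect to s. -/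

import Mathlib

/-- The non-autonomous point transformation T8 (ûₙ = κₙuₙ, t̂ = −t)
relates equation (E7) to equation (E4) with c = 0. -/
theorem stmt_14 (a : ℝ) (κ : ℤ → ℝ)
    (hκ4 : ∀ n, κ (n + 4) = κ n)
    (hκ0 : κ 0 = 1) (hκ1 : κ 1 = 1) (hκ2 : κ 2 = -1) (hκ3 : κ 3 = -1)
    (u v : ℝ → ℤ → ℝ)
    (hu : ∀ t n, HasDerivAt (fun s => u s n)
      (((u t n) ^ 2 - a ^ 2) *
        (((u t (n + 1)) ^ 2 - a ^ 2) * (u t (n + 2) - u t n) +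
          ((u t (n - 1)) ^ 2 - a ^ 2) * (u t n - u t (n - 2)))) t)
    (hv : ∀ s n, v s n = κ n * u (-s) n) :
    ∀ s n, HasDerivAt (fun r => v r n)
      (((v s n) ^ 2 - a ^ 2) *
        (((v s (n + 1)) ^ 2 - a ^ 2) * (v s (n + 2) + v s n) -
          ((v s (n - 1)) ^ 2 - a ^ 2) * (v s n + v s (n - 2)))) s := by
  have base : ∀ m : ℤ, κ (4*m) = 1 ∧ κ (4*m+1) = 1 ∧ κ (4*m+2) = -1 ∧ κ (4*m+3) = -1 := by
    intro m
    induction m using Int.induction_on with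
    | zero => norm_num [hκ0, hκ1, hκ2, hκ3]
    | succ k ih =>
      have e : ∀ j : ℤ, κ (4*((k:ℤ)+1)+j) = κ (4*(k:ℤ)+j) := by
        intro j
        have h : 4*((k:ℤ)+1)+j = (4*(k:ℤ)+j)+4 := by ring
        rw [h, hκ4]
      have e0 := e 0; have e1 := e 1; have e2 := e 2; have e3 := e 3
      simp only [add_zero] at e0
      refine ⟨?_, ?_, ?_, ?_⟩ <;> simp [e0, e1, e2, e3, ih.1, ih.2.1, ih.2.2.1, ih.2.2.2]
    | pred k ih =>
      have e : ∀ j : ℤ, κ (4*(-(k:ℤ))+j) = κ (4*(-(k:ℤ)-1)+j) := by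
        intro j
        have h : 4*(-(k:ℤ))+j = (4*(-(k:ℤ)-1)+j)+4 := by ring
        rw [h, hκ4]
      have e0 := e 0; have e1 := e 1; have e2 := e 2; have e3 := e 3
      simp only [add_zero] at e0
      obtain ⟨i0, i1, i2, i3⟩ := ih
      rw [e0] at i0; rw [e1] at i1; rw [e2] at i2; rw [e3] at i3
      exact ⟨i0, i1, i2, i3⟩
  have hval : ∀ n : ℤ, κ n = 1 ∨ κ n = -1 := by
    intro n
    obtain ⟨q, r, rfl, hr⟩ : ∃ q r : ℤ, n = 4 * q + r ∧ (r = 0 ∨ r = 1 ∨ r = 2 ∨ r = 3) :=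
      ⟨n / 4, n % 4, by omega, by omega⟩
    obtain ⟨b0, b1, b2, b3⟩ := base q
    rcases hr with rfl | rfl | rfl | rfl <;> simp [b0, b1, b2, b3]
  have hk2 : ∀ n : ℤ, κ (n + 2) = -κ n := by
    intro n
    obtain ⟨q, r, rfl, hr⟩ : ∃ q r : ℤ, n = 4 * q + r ∧ (r = 0 ∨ r = 1 ∨ r = 2 ∨ r = 3) :=
      ⟨n / 4, n % 4, by omega, by omega⟩
    obtain ⟨b0, b1, b2, b3⟩ := base q
    obtain ⟨c0, c1, c2, c3⟩ := base (q + 1)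
    rcases hr with rfl | rfl | rfl | rfl
    · rw [show 4 * q + 0 + 2 = 4 * q + 2 by ring, b2]
      simp [b0]
    · rw [show 4 * q + 1 + 2 = 4 * q + 3 by ring, b3, b1]
    · rw [show 4 * q + 2 + 2 = 4 * (q + 1) by ring, c0, b2]; norm_num
    · rw [show 4 * q + 3 + 2 = 4 * (q + 1) + 1 by ring, c1, b3]; norm_num
  intro s n
  have hm2 : κ (n - 2) = -κ n := by
    have := hk2 (n - 2)
    have h : n - 2 + 2 = n := by ring
    rw [h] at this
    linarith
  have hneg : HasDerivAt (fun r : ℝ => -r) (-1 : ℝ) s := by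
    exact hasDerivAt_neg s
  have h1 := (hu (-s) n).comp s hneg
  have h2 := h1.const_mul (κ n)
  simp only [hv]
  refine h2.congr_deriv ?_
  rw [hk2 n, hm2]
  rcases hval n with h | h <;> rcases hval (n+1) with h' | h' <;>
    rcases hval (n-1) with h'' | h'' <;> rw [h, h', h''] <;> ring
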